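/- arXiv:2001.07634 — 5 statements merged into one kernel-verified Lean document; each statement's English description precedes it below -/
import Mathlib

section
/- Let A be a torsion-free non-cyclic group generated by non-trivial elements a_1, a_2, a_3, a_4 satisfying a_1 = a_2 and a_1 a_2 a_3 a_4 = 1. Let m(1), m(2), m(3), m(4) be strictly positive integers with greatest common divisor 1 and with m(4) ≠ m(1) and m(1) ≠ m(2). Let G = (A * ⟨t⟩)/N(a_1 t^{m(1)} a_2 t^{m(2)} a_3 t^{m(3)} a_4 t^{m(4)}). If none of a_1, a_2, a_3, a_4 is isolated in A, then the image of t in G has infinite order. -/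
open Monoid Coprod Multiplicative

/-- The pre-2025 Mathlib `Monoid.IsTorsionFree` (removed since): every non-identity
element has infinite order. -/
def Monoid.IsTorsionFree (G : Type*) [Monoid G] : Prop :=
  ∀ g : G, g ≠ 1 → ¬IsOfFinOrder g

private lemma tf_zpow' {A : Type*} [Group A] (hA : Monoid.IsTorsionFree A) (g : A) (n : ℤ)
    (h : g ^ n = 1) : g = 1 ∨ n = 0 := by
  by_contra hc
  push_neg at hc
  obtain ⟨hg, hn⟩ := hc
  apply hA g hg
  refine isOfFinOrder_iff_pow_eq_one.mpr ⟨n.natAbs, by omega, ?_⟩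
  rcases Int.natAbs_eq n with he | he
  · rw [← zpow_natCast, ← he, h]
  · rw [← zpow_natCast, show ((n.natAbs : ℤ)) = -n by omega, zpow_neg, h, inv_one]

private lemma key_lemma' {A : Type*} [Group A] (hA : Monoid.IsTorsionFree A) (p q : A)
    (hp : p ≠ 1) (hq1 : q ≠ 1) (hpq : q * p * q⁻¹ = p⁻¹) :
    ∀ (i j : ℤ), q ^ j = p ^ i → j = 0 := by
  intro i j h
  have h1 : q * p ^ i * q⁻¹ = p ^ (-i) := by
    rw [← conj_zpow, hpq, inv_zpow, ← zpow_neg]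
  have h2 : q * p ^ i * q⁻¹ = p ^ i := by rw [← h]; group
  have h4 : p ^ i = p ^ (-i) := h2.symm.trans h1
  have h3 : p ^ (i + i) = 1 := by
    rw [zpow_add]; nth_rewrite 2 [h4]; rw [← zpow_add]; simp
  have hi : i = 0 := by rcases tf_zpow' hA p (i+i) h3 with h' | h' <;> [exact absurd h' hp; omega]
  rw [hi, zpow_zero] at h
  rcases tf_zpow' hA q j h with h' | h' <;> [exact absurd h' hq1; exact h']

private lemma exists_root_quad' (m0 m1 m2 m3 : ℤ) (h1 : m1 ≠ 0) (h3 : m3 ≠ 0) :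
    ∃ α : ℂ, α ≠ 0 ∧ (m1:ℂ) * α^2 + ((m0:ℂ)+(m2:ℂ)) * α + (m3:ℂ) = 0 := by
  have hm1 : (m1:ℂ) ≠ 0 := Int.cast_ne_zero.mpr h1
  obtain ⟨α, hα⟩ := Complex.exists_root
    (f := Polynomial.C (m1:ℂ) * Polynomial.X^2 + Polynomial.C ((m0:ℂ)+(m2:ℂ)) * Polynomial.X
      + Polynomial.C (m3:ℂ))
    (by rw [Polynomial.degree_quadratic hm1]; norm_num)
  have heq : (m1:ℂ) * α^2 + ((m0:ℂ)+(m2:ℂ)) * α + (m3:ℂ) = 0 := by simpa using hα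
  refine ⟨α, ?_, heq⟩
  intro h0
  rw [h0] at heq
  simp at heq
  exact h3 heq

private lemma exists_hom' {A : Type*} [Group A] (hA : Monoid.IsTorsionFree A) (p q : A)
    (hp : p ≠ 1) (hq1 : q ≠ 1) (hpq : q * p * q⁻¹ = p⁻¹)
    (hgen2 : Subgroup.closure ({p, q} : Set A) = ⊤)
    {G : Type*} [Group G] (β : G) :
    ∃ f : A →* G, f p = 1 ∧ f q = β := by
  have hqpq : ∀ i : ℤ, q * p ^ i * q⁻¹ = p ^ (-i) := by
    intro i; rw [← conj_zpow, hpq, inv_zpow, ← zpow_neg]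
  have hN : (Subgroup.zpowers p).Normal := by
    rw [← Subgroup.normalizer_eq_top_iff, eq_top_iff, ← hgen2, Subgroup.closure_le]
    rintro g (rfl | rfl)
    · exact Subgroup.le_normalizer (Subgroup.mem_zpowers g)
    · simp only [SetLike.mem_coe]
      rw [Subgroup.mem_normalizer_iff]
      intro h
      constructor
      · rintro hh
        obtain ⟨i, rfl⟩ := Subgroup.mem_zpowers_iff.mp hh
        rw [hqpq]
        exact Subgroup.zpow_mem _ (Subgroup.mem_zpowers p) _
      · rintro hh
        obtain ⟨i, hi⟩ := Subgroup.mem_zpowers_iff.mp hh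
        have : h = g⁻¹ * p ^ i * g := by rw [hi]; group
        rw [this, show g⁻¹ * p ^ i * g = g⁻¹ * (g * p ^ (-i) * g⁻¹) * g by rw [hqpq]; group]
        group
        exact Subgroup.zpow_mem _ (Subgroup.mem_zpowers p) _
  haveI := hN
  set π := QuotientGroup.mk' (Subgroup.zpowers p) with hπ
  set qb := π q with hqb
  have hπp : π p = 1 := by
    rw [hπ, QuotientGroup.mk'_apply, QuotientGroup.eq_one_iff]
    exact Subgroup.mem_zpowers p
  have hjz : ∀ j : ℤ, qb ^ j = 1 → j = 0 := by
    intro j hj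
    rw [hqb, ← map_zpow, hπ, QuotientGroup.mk'_apply, QuotientGroup.eq_one_iff] at hj
    obtain ⟨i, hi⟩ := Subgroup.mem_zpowers_iff.mp hj
    exact key_lemma' hA p q hp hq1 hpq i j hi.symm
  have hsurj : Subgroup.zpowers qb = ⊤ := by
    have h1 : Subgroup.map π ⊤ = ⊤ :=
      Subgroup.map_top_of_surjective π (QuotientGroup.mk'_surjective _)
    rw [← hgen2, MonoidHom.map_closure] at h1
    have himg : (π '' {p, q}) = {1, qb} := by rw [Set.image_pair, hπp]
    rw [himg] at h1
    rw [eq_top_iff, ← h1, Subgroup.closure_le]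
    rintro g (rfl | rfl)
    · exact Subgroup.one_mem _
    · exact Subgroup.mem_zpowers _
  set E := (zpowersHom _) qb with hE
  have hEapp : ∀ n : Multiplicative ℤ, E n = qb ^ (toAdd n) := fun n => rfl
  have hinj : Function.Injective E := by
    rw [injective_iff_map_eq_one]
    intro n hn
    have := hjz (toAdd n) (by rw [← hEapp]; exact hn)
    have : toAdd n = toAdd (1 : Multiplicative ℤ) := this
    exact toAdd.injective this
  have hsurjE : Function.Surjective E := by
    intro g
    have hg : g ∈ Subgroup.zpowers qb := by rw [hsurj]; trivial
    obtain ⟨k, hk⟩ := Subgroup.mem_zpowers_iff.mp hg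
    exact ⟨ofAdd k, by rw [hEapp]; simpa using hk⟩
  set e := MulEquiv.ofBijective E ⟨hinj, hsurjE⟩ with he
  set ψ := (zpowersHom G) β with hψ
  refine ⟨ψ.comp (e.symm.toMonoidHom.comp π), ?_, ?_⟩
  · simp only [MonoidHom.comp_apply, MulEquiv.coe_toMonoidHom]
    rw [hπp, map_one, map_one]
  · simp only [MonoidHom.comp_apply, MulEquiv.coe_toMonoidHom]
    have h2 : π q = e (ofAdd 1) := by
      rw [he]; show π q = E (ofAdd 1); rw [hEapp]
      simp [hqb]
    rw [h2, MulEquiv.symm_apply_apply, hψ, zpowersHom_apply]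
    simp

private lemma main_case' {A : Type*} [Group A] (hA : Monoid.IsTorsionFree A) (x y : A)
    (hy1 : y ≠ 1) (hxy : x * x * y * y = 1)
    (hnc' : x ∈ Subgroup.zpowers y → False)
    (hgen2 : Subgroup.closure ({x, y} : Set A) = ⊤)
    {G : Type*} [Group G] (β : G) :
    ∃ f : A →* G, f x = β⁻¹ ∧ f y = β := by
  have hp : x * y ≠ 1 := by
    intro h
    refine hnc' ⟨-1, ?_⟩
    show y ^ (-1 : ℤ) = x
    rw [zpow_neg, zpow_one]
    exact (eq_inv_of_mul_eq_one_left h).symm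
  have hxy' : (x*x) * (y*y) = 1 := by rw [← hxy]; group
  have hx2 : x*x = (y*y)⁻¹ := eq_inv_of_mul_eq_one_left hxy'
  have hcomm : x*x*y = y*(x*x) := by rw [hx2]; group
  have hpq : y * (x*y) * y⁻¹ = (x*y)⁻¹ := by
    calc y*(x*y)*y⁻¹ = y*x := by group
    _ = y*(x*x)*x⁻¹ := by group
    _ = (x*x)*y*x⁻¹ := by rw [← hcomm]
    _ = (y*y)⁻¹*y*x⁻¹ := by rw [hx2]
    _ = y⁻¹*x⁻¹ := by group
    _ = (x*y)⁻¹ := by group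
  have hgen2' : Subgroup.closure ({x*y, y} : Set A) = ⊤ := by
    rw [eq_top_iff, ← hgen2, Subgroup.closure_le]
    rintro g (rfl | rfl)
    · simp only [SetLike.mem_coe]
      have h1 : (g*y) * y⁻¹ ∈ Subgroup.closure ({g*y, y} : Set A) :=
        Subgroup.mul_mem _ (Subgroup.subset_closure (Or.inl rfl))
          (Subgroup.inv_mem _ (Subgroup.subset_closure (Or.inr rfl)))
      simpa using h1
    · exact Subgroup.subset_closure (Or.inr rfl)
  obtain ⟨f, hfp, hfq⟩ := exists_hom' hA (x*y) y hp hy1 hpq hgen2' β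
  refine ⟨f, ?_, hfq⟩
  have hxw : x = (x*y) * y⁻¹ := by group
  rw [hxw, map_mul, map_inv, hfp, hfq, one_mul]

/-- **Lemma 3.1.** Let `A` be a torsion-free non-cyclic group generated by nontrivial
elements `a₁,a₂,a₃,a₄` with `a₁ = a₂` and `a₁a₂a₃a₄ = 1`; let `m(1),…,m(4)` be strictly
positive integers with gcd `1`, `m(4) ≠ m(1)` and `m(1) ≠ m(2)`, and let
`G = (A ∗ ⟨t⟩)/N(a₁t^{m(1)}a₂t^{m(2)}a₃t^{m(3)}a₄t^{m(4)})`.  If none of the `aᵢ` is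
isolated (i.e. for each `i` some `a_k`, `k ≠ i`, lies in the cyclic subgroup `⟨aᵢ⟩`),
then the image of `t` in `G` has infinite order.  Here `⟨t⟩` is the infinite cyclic
group `Multiplicative ℤ` with generator `t = ofAdd 1`. -/
theorem image_of_t_has_infinite_order_of_no_isolated_generator
    {A : Type*} [Group A] (hA : Monoid.IsTorsionFree A) (hnc : ¬ IsCyclic A)
    (a : Fin 4 → A) (ha : ∀ i, a i ≠ 1)
    (hgen : Subgroup.closure (Set.range a) = ⊤)
    (h12 : a 0 = a 1) (hrel : a 0 * a 1 * a 2 * a 3 = 1)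
    (m : Fin 4 → ℤ) (hm : ∀ i, 0 < m i)
    (hgcd : Finset.univ.gcd m = 1)
    (hm41 : m 3 ≠ m 0) (hm12 : m 0 ≠ m 1)
    (hiso : ∀ i, ∃ k, k ≠ i ∧ a k ∈ Subgroup.zpowers (a i))
    (w : A ∗ Multiplicative ℤ)
    (hw : w = (List.ofFn fun i => inl (a i) * inr (ofAdd (m i))).prod) :
    ¬ IsOfFinOrder
      ((QuotientGroup.mk' (Subgroup.normalClosure {w})) (inr (ofAdd 1))) := by
  have hfin4 : ∀ i : Fin 4, i = 0 ∨ i = 1 ∨ i = 2 ∨ i = 3 := by decide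
  have hcyc : a 0 ∈ Subgroup.zpowers (a 2) → False := by
    intro h0
    apply hnc
    have h1 : a 1 ∈ Subgroup.zpowers (a 2) := h12 ▸ h0
    have h3 : a 3 ∈ Subgroup.zpowers (a 2) := by
      have h3' : a 3 = (a 0 * a 1 * a 2)⁻¹ := eq_inv_of_mul_eq_one_right hrel
      rw [h3']
      exact Subgroup.inv_mem _ (Subgroup.mul_mem _ (Subgroup.mul_mem _ h0 h1)
        (Subgroup.mem_zpowers _))
    have hall : ∀ i, a i ∈ Subgroup.zpowers (a 2) := by
      intro i
      rcases hfin4 i with rfl | rfl | rfl | rfl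
      · exact h0
      · exact h1
      · exact Subgroup.mem_zpowers _
      · exact h3
    have hle : Subgroup.closure (Set.range a) ≤ Subgroup.zpowers (a 2) := by
      rw [Subgroup.closure_le]
      rintro g ⟨i, rfl⟩
      exact hall i
    rw [hgen] at hle
    exact ⟨⟨a 2, fun g => hle (by trivial)⟩⟩
  have hy : a 3 = a 2 := by
    have hne2 : ∀ kk : Fin 4, kk ≠ 2 → kk = 0 ∨ kk = 1 ∨ kk = 3 := by decide
    have hne3 : ∀ kk : Fin 4, kk ≠ 3 → kk = 0 ∨ kk = 1 ∨ kk = 2 := by decide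
    obtain ⟨k2, hk2, hk2m⟩ := hiso 2
    rcases hne2 k2 hk2 with rfl | rfl | rfl
    · exact (hcyc hk2m).elim
    · exact (hcyc (by rw [h12]; exact hk2m)).elim
    · obtain ⟨n, hn⟩ := Subgroup.mem_zpowers_iff.mp hk2m
      obtain ⟨k3, hk3, hk3m⟩ := hiso 3
      rcases hne3 k3 hk3 with rfl | rfl | rfl
      · obtain ⟨j, hj⟩ := Subgroup.mem_zpowers_iff.mp hk3m
        refine (hcyc ⟨n * j, ?_⟩).elim
        show a 2 ^ (n * j) = a 0
        rw [zpow_mul, hn, hj]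
      · obtain ⟨j, hj⟩ := Subgroup.mem_zpowers_iff.mp hk3m
        rw [← h12] at hj
        refine (hcyc ⟨n * j, ?_⟩).elim
        show a 2 ^ (n * j) = a 0
        rw [zpow_mul, hn, hj]
      · obtain ⟨j, hj⟩ := Subgroup.mem_zpowers_iff.mp hk3m
        have h22 : a 2 ^ (n * j) = a 2 := by rw [zpow_mul, hn, hj]
        have h23 : a 2 ^ (n * j - 1) = 1 := by rw [zpow_sub, h22]; simp
        have hnj : n * j = 1 := by
          rcases tf_zpow' hA (a 2) (n*j-1) h23 with h' | h'
          · exact absurd h' (ha 2)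
          · omega
        rcases Int.mul_eq_one_iff_eq_one_or_neg_one.mp hnj with ⟨hn1, _⟩ | ⟨hn1, _⟩
        · rw [hn1, zpow_one] at hn; exact hn.symm
        · rw [hn1] at hn
          have h32 : a 3 = (a 2)⁻¹ := by rw [← hn]; group
          have habs : a 0 * a 1 * a 2 * a 3 = a 0 * a 0 := by
            rw [← h12, h32]; group
          have h00 : a 0 ^ (2:ℤ) = 1 := by
            rw [zpow_two]
            exact habs.symm.trans hrel
          rcases tf_zpow' hA (a 0) 2 h00 with h' | h'
          · exact absurd h' (ha 0)
          · omega
  -- Klein relation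
  have hxy : a 0 * a 0 * a 2 * a 2 = 1 := by
    have := hrel
    rw [← h12, hy] at this
    exact this
  have hgen2 : Subgroup.closure ({a 0, a 2} : Set A) = ⊤ := by
    rw [eq_top_iff, ← hgen, Subgroup.closure_le]
    rintro g ⟨i, rfl⟩
    rcases hfin4 i with rfl | rfl | rfl | rfl
    · exact Subgroup.subset_closure (Or.inl rfl)
    · rw [← h12]; exact Subgroup.subset_closure (Or.inl rfl)
    · exact Subgroup.subset_closure (Or.inr rfl)
    · rw [hy]; exact Subgroup.subset_closure (Or.inr rfl)
  -- complex root
  obtain ⟨α, hα, hroot⟩ := exists_root_quad' (m 0) (m 1) (m 2) (m 3)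
    (by have := hm 1; omega) (by have := hm 3; omega)
  have hSS : Equiv.mulLeft₀ α hα * Equiv.mulLeft₀ α⁻¹ (inv_ne_zero hα) = 1 := by
    ext z
    simp only [Equiv.Perm.mul_apply, Equiv.mulLeft₀_apply, Equiv.Perm.one_apply]
    field_simp
  have hSinv : (Equiv.mulLeft₀ α⁻¹ (inv_ne_zero hα))⁻¹ = Equiv.mulLeft₀ α hα :=
    inv_eq_of_mul_eq_one_left hSS
  obtain ⟨f, hfx, hfq⟩ := main_case' hA (a 0) (a 2) (ha 2) hxy hcyc hgen2
    (Equiv.mulLeft₀ α⁻¹ (inv_ne_zero hα))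
  rw [hSinv] at hfx
  -- translation homomorphism
  obtain ⟨T, hTapp⟩ : ∃ T : Multiplicative ℤ →* Equiv.Perm ℂ,
      ∀ k : ℤ, T (ofAdd k) = Equiv.addLeft ((k : ℤ) : ℂ) := by
    refine ⟨MonoidHom.mk' (fun n => Equiv.addLeft ((toAdd n : ℤ) : ℂ)) ?_, fun k => rfl⟩
    intro n1 n2
    ext z
    simp only [Equiv.Perm.mul_apply, Equiv.coe_addLeft, toAdd_mul]
    push_cast
    ring
  have hφw : (Coprod.lift f T) w = 1 := by
    rw [hw]
    have hlist : (List.ofFn fun i => inl (a i) * inr (ofAdd (m i)) : List (A ∗ Multiplicative ℤ))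
        = [inl (a 0) * inr (ofAdd (m 0)), inl (a 1) * inr (ofAdd (m 1)),
           inl (a 2) * inr (ofAdd (m 2)), inl (a 3) * inr (ofAdd (m 3))] := by
      simp [List.ofFn_succ]
    rw [hlist]
    simp only [List.prod_cons, List.prod_nil, mul_one, map_mul, Coprod.lift_apply_inl,
      Coprod.lift_apply_inr]
    rw [← h12, hy, hfx, hfq, hTapp, hTapp, hTapp, hTapp]
    ext z
    simp only [Equiv.Perm.mul_apply, Equiv.mulLeft₀_apply, Equiv.coe_addLeft,
      Equiv.Perm.one_apply]
    field_simp
    linear_combination hroot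
  -- conclude
  intro hfin
  obtain ⟨n, hn, hpow⟩ := isOfFinOrder_iff_pow_eq_one.mp hfin
  have hker : Subgroup.normalClosure {w} ≤ (Coprod.lift f T).ker := by
    apply Subgroup.normalClosure_le_normal
    intro g hg
    rw [Set.mem_singleton_iff] at hg
    subst hg
    simp only [SetLike.mem_coe, MonoidHom.mem_ker]
    exact hφw
  have hΦt : (QuotientGroup.lift (Subgroup.normalClosure {w}) (Coprod.lift f T) hker)
      ((QuotientGroup.mk' (Subgroup.normalClosure {w})) (inr (ofAdd 1)))
      = T (ofAdd 1) := by
    rw [QuotientGroup.mk'_apply, QuotientGroup.lift_mk', Coprod.lift_apply_inr]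
  have h1 : (T (ofAdd 1))^n = 1 := by
    rw [← hΦt, ← map_pow, hpow, map_one]
  have hofadd : (ofAdd (1:ℤ))^n = ofAdd ((n:ℤ)) := by
    rw [← ofAdd_nsmul]; congr 1; simp
  have h2 : T (ofAdd ((n:ℤ))) = 1 := by
    rw [← hofadd, map_pow, h1]
  rw [hTapp] at h2
  have h3 := congrArg (fun (e : Equiv.Perm ℂ) => e 0) h2
  simp only [Equiv.coe_addLeft, Equiv.Perm.one_apply, add_zero] at h3
  have h4 : (n : ℂ) = 0 := h3
  have h5 : n = 0 := by exact_mod_cast h4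
  omega
end

section
/- Let F be a field, let G be a torsion-free group, and let α = a·g + b·h be an element of the group algebra F[G], where g and h are distinct elements of G and a and b are non-zero elements of F. Then α is not a unit in F[G], and α is not a zero-divisor in F[G] (i.e. there is no non-zero β ∈ F[G] with αβ = 0). -/
open MonoidAlgebra

/-- Helper: a finitely supported function can't be nonzero on the whole chain
`x^n * c` when `x` has infinite order. -/
lemma aux_infinite_support_chain {F : Type*} [Field F] {G : Type*} [Group G]
    {x : G} (hx : ¬ IsOfFinOrder x) (c : G) (β : MonoidAlgebra F G)
    (H : ∀ n : ℕ, β.coeff (x ^ n * c) ≠ 0) : False := by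
  have hinj : Function.Injective (fun n : ℕ => x ^ n * c) := by
    intro m n hmn
    have : x ^ m = x ^ n := mul_right_cancel hmn
    exact injective_pow_iff_not_isOfFinOrder.mpr hx this
  have hinf : (β.coeff.support : Set G).Infinite :=
    Set.infinite_of_injective_forall_mem hinj
      (fun n => Finsupp.mem_support_iff.mpr (H n))
  exact hinf β.coeff.support.finite_toSet

/-- **Lemma 3.3.** Let `F` be a field, `G` a torsion-free group, and
`α = a·g + b·h ∈ F[G]` with `g ≠ h` in `G` and `a, b` nonzero in `F`.  Then `α` is
neither a unit nor a zero-divisor in the group algebra `F[G]`. -/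
theorem two_term_element_of_group_algebra_not_unit_nor_zero_divisor
    {F : Type*} [Field F] {G : Type*} [Group G]
    (hG : Monoid.IsTorsionFree G)
    (g h : G) (hgh : g ≠ h) (a b : F) (ha : a ≠ 0) (hb : b ≠ 0)
    (α : MonoidAlgebra F G)
    (hα : α = MonoidAlgebra.single g a + MonoidAlgebra.single h b) :
    ¬ IsUnit α ∧ ∀ β : MonoidAlgebra F G, α * β = 0 → β = 0 := by
  classical
  set x : G := g⁻¹ * h with hxdef
  have hx1 : x ≠ 1 := by
    intro hx
    exact hgh (by rwa [hxdef, inv_mul_eq_one] at hx)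
  have hxfin : ¬ IsOfFinOrder x := hG x hx1
  -- the key coefficient relation
  have key : ∀ (β : MonoidAlgebra F G) (z : G),
      (α * β).coeff (h * z) = a * β.coeff (x * z) + b * β.coeff z := by
    intro β z
    rw [hα, add_mul, coeff_add, Finsupp.add_apply, single_mul_apply, single_mul_apply]
    congr 2
    · rw [hxdef]; group
    · rw [inv_mul_cancel_left]
  constructor
  · -- not a unit
    rintro hu
    obtain ⟨γ, hγ⟩ := hu.exists_right_inv
    have hγne : γ ≠ 0 := by
      rintro rfl
      simp at hγ
    obtain ⟨c, hc⟩ := Finsupp.ne_iff.mp (coeff_injective.ne hγne)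
    simp only [coeff_zero, Finsupp.coe_zero, Pi.zero_apply] at hc
    have key1 : ∀ z : G, a * γ.coeff (x * z) + b * γ.coeff z =
        (if h * z = 1 then (1 : F) else 0) := by
      intro z
      rw [← key γ z, hγ, MonoidAlgebra.one_def, coeff_single, Finsupp.single_apply]
      simp [eq_comm]
    by_cases hex : ∃ n : ℕ, h * (x ^ n * c) = 1
    · -- go backwards along the chain with x⁻¹
      obtain ⟨n₀, hn₀⟩ := hex
      have hxinv : ¬ IsOfFinOrder x⁻¹ := by
        rwa [isOfFinOrder_inv_iff]
      have H : ∀ n : ℕ, γ.coeff (x⁻¹ ^ n * c) ≠ 0 := by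
        intro n
        induction n with
        | zero => simpa using hc
        | succ n ih =>
          have hne : h * (x⁻¹ ^ (n + 1) * c) ≠ 1 := by
            intro heq
            have h1 : x ^ n₀ * c = h⁻¹ :=
              (inv_eq_of_mul_eq_one_right hn₀).symm
            have h2 : x⁻¹ ^ (n + 1) * c = h⁻¹ :=
              (inv_eq_of_mul_eq_one_right heq).symm
            have h3 : x ^ (n₀ : ℤ) = x ^ (-(n + 1 : ℕ) : ℤ) := by
              have := h1.trans h2.symm
              have h4 : x ^ n₀ = x⁻¹ ^ (n + 1) := mul_right_cancel this
              rw [zpow_natCast, h4, zpow_neg, ← inv_zpow, zpow_natCast]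
            have h5 := injective_zpow_iff_not_isOfFinOrder.mpr hxfin h3
            omega
          have hrel := key1 (x⁻¹ ^ (n + 1) * c)
          rw [if_neg hne] at hrel
          have hxz : x * (x⁻¹ ^ (n + 1) * c) = x⁻¹ ^ n * c := by
            group
          rw [hxz] at hrel
          intro h0
          rw [h0, mul_zero, add_zero, mul_eq_zero] at hrel
          rcases hrel with h' | h'
          · exact ha h'
          · exact ih h'
      exact aux_infinite_support_chain hxinv c γ H
    · -- go forwards along the chain with x
      push_neg at hex
      have H : ∀ n : ℕ, γ.coeff (x ^ n * c) ≠ 0 := by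
        intro n
        induction n with
        | zero => simpa using hc
        | succ n ih =>
          have hrel := key1 (x ^ n * c)
          rw [if_neg (hex n)] at hrel
          have hxz : x * (x ^ n * c) = x ^ (n + 1) * c := by
            rw [← mul_assoc, ← pow_succ']
          rw [hxz] at hrel
          intro h0
          rw [h0, mul_zero, zero_add, mul_eq_zero] at hrel
          rcases hrel with h' | h'
          · exact hb h'
          · exact ih h'
      exact aux_infinite_support_chain hxfin c γ H
  · -- not a zero divisor
    intro β hβ
    by_contra hβne
    obtain ⟨c, hc⟩ := Finsupp.ne_iff.mp (coeff_injective.ne hβne)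
    simp only [coeff_zero, Finsupp.coe_zero, Pi.zero_apply] at hc
    have key0 : ∀ z : G, a * β.coeff (x * z) + b * β.coeff z = 0 := by
      intro z
      rw [← key β z, hβ]
      simp
    have H : ∀ n : ℕ, β.coeff (x ^ n * c) ≠ 0 := by
      intro n
      induction n with
      | zero => simpa using hc
      | succ n ih =>
        have hrel := key0 (x ^ n * c)
        have hxz : x * (x ^ n * c) = x ^ (n + 1) * c := by
          rw [← mul_assoc, ← pow_succ']
        rw [hxz] at hrel
        intro h0
        rw [h0, mul_zero, zero_add, mul_eq_zero] at hrel
        rcases hrel with h' | h'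
        · exact hb h'
        · exact ih h'
    exact aux_infinite_support_chain hxfin c β H
end

section
/- Let A be a group and let w = a_1 t^{m(1)} ··· a_k t^{m(k)} be a cyclically reduced element of A * ⟨t⟩ with all a_i non-trivial in A, all m(i) non-zero integers, and m(1) + ··· + m(k) = 0. For n ∈ ℤ set A_n = t^n A t^{-n} ≤ A * ⟨t⟩, so that the normal closure of A in A * ⟨t⟩ is the free product of the subgroups A_n (n ∈ ℤ), and w can be written uniquely as a word w_0 in this free product. Let μ and M denote the minimum and maximum of the partial sums m(1) + ··· + m(j) (1 ≤ j ≤ k), let H = (∗_{n=μ}^{M} A_n)/N(w_0), and let B_- and B_+ denote the images in H of ∗_{n=μ}^{M-1} A_n and ∗_{n=μ+1}^{M} A_n respectively. If the natural maps ∗_{n=μ}^{M-1} A_n → H and ∗_{n=μ+1}^{M} A_n → H are injective, then G = (A * ⟨t⟩)/N(w) is isomorphic to the HNN extension of H with stable letter t and associated subgroups B_- and B_+, where conjugation by the stable letter carries B_- to B_+ via the isomorphism induced by A_n ↦ A_{n+1} (μ ≤ n ≤ M−1). -/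
open Monoid Coprod Multiplicative

set_option maxHeartbeats 2000000 in
/-- Let `w = a₁t^{m(1)}⋯a_kt^{m(k)} ∈ A ∗ ⟨t⟩` be cyclically reduced with all `aᵢ`
nontrivial, all `m(i)` nonzero, and exponent sum `0`.  For `n ∈ ℤ` the subgroup
`A_n = tⁿAt⁻ⁿ` is a copy of `A`, and the normal closure of `A` is the free product of
the `A_n`; `w` can be written uniquely as a word `w₀` in this free product.  Let `μ`,
`M` be the minimum and maximum of the partial sums of the `m(i)`, let
`H = (∗_{n=μ}^{M} A_n)/N(w₀)`, and let `B₋`, `B₊` be the images in `H` of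
`∗_{n=μ}^{M-1} A_n` and `∗_{n=μ+1}^{M} A_n`.  If the natural maps of these two free
products into `H` are injective, then `G = (A ∗ ⟨t⟩)/N(w)` is the HNN extension of `H`
with stable letter `t` and associated subgroups `B₋`, `B₊`, where conjugation by the
stable letter carries `B₋` to `B₊` via the isomorphism induced by `A_n ↦ A_{n+1}`.
Here `⟨t⟩` is `Multiplicative ℤ` with generator `t = ofAdd 1`; the free product
`∗_{n=μ}^{M} A_n` is modelled as `CoprodI` of copies of `A` indexed by
`{n : ℤ // μ ≤ n ∧ n ≤ M}`, mapping to `A ∗ ⟨t⟩` by `a ↦ tⁿat⁻ⁿ` on the `n`-th copy. -/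
theorem quotient_is_hnn_extension_of_singular_relator
    {A : Type*} [Group A]
    (k : ℕ) (hk1 : 1 ≤ k)
    (a : Fin k → A) (m : Fin k → ℤ)
    (ha : ∀ i, a i ≠ 1) (hm : ∀ i, m i ≠ 0) (hsum : ∑ i, m i = 0)
    (w : A ∗ Multiplicative ℤ)
    (hw : w = (List.ofFn fun i => inl (a i) * inr (ofAdd (m i))).prod)
    (s : Fin k → ℤ) (hs : ∀ j, s j = ∑ i ∈ Finset.Iic j, m i)
    (μ M : ℤ) (hμ : ∀ j, μ ≤ s j) (hμ' : ∃ j, s j = μ)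
    (hM : ∀ j, s j ≤ M) (hM' : ∃ j, s j = M)
    -- the embedding of the free product `∗_{n=μ}^{M} A_n` into `A ∗ ⟨t⟩`,
    -- sending the copy of `A` with index `n` to `A_n = tⁿAt⁻ⁿ`
    (ψ : CoprodI (fun _ : {n : ℤ // μ ≤ n ∧ n ≤ M} => A) →* A ∗ Multiplicative ℤ)
    (hψ : ψ = CoprodI.lift fun n =>
      ((MulAut.conj (inr (ofAdd n.1) : A ∗ Multiplicative ℤ)).toMonoidHom.comp inl))
    -- `w` written as a word `w₀` in the free product of the `A_n`
    (w₀ : CoprodI (fun _ : {n : ℤ // μ ≤ n ∧ n ≤ M} => A))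
    (hw₀ : ψ w₀ = w)
    -- the natural map `∗_{n=μ}^{M-1} A_n → H = (∗_{n=μ}^{M} A_n)/N(w₀)`
    (jminus : CoprodI (fun _ : {n : ℤ // μ ≤ n ∧ n < M} => A) →*
      CoprodI (fun _ : {n : ℤ // μ ≤ n ∧ n ≤ M} => A) ⧸ Subgroup.normalClosure {w₀})
    (hjminus : jminus = CoprodI.lift fun n =>
      (QuotientGroup.mk' (Subgroup.normalClosure {w₀})).comp
        (CoprodI.of (M := fun _ : {n : ℤ // μ ≤ n ∧ n ≤ M} => A)
          (i := ⟨n.1, n.2.1, n.2.2.le⟩)))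
    -- the natural map `∗_{n=μ+1}^{M} A_n → H`, indexed here by the predecessor `n`
    (jplus : CoprodI (fun _ : {n : ℤ // μ ≤ n ∧ n < M} => A) →*
      CoprodI (fun _ : {n : ℤ // μ ≤ n ∧ n ≤ M} => A) ⧸ Subgroup.normalClosure {w₀})
    (hjplus : jplus = CoprodI.lift fun n =>
      (QuotientGroup.mk' (Subgroup.normalClosure {w₀})).comp
        (CoprodI.of (M := fun _ : {n : ℤ // μ ≤ n ∧ n ≤ M} => A)
          (i := ⟨n.1 + 1, by obtain ⟨h1, h2⟩ := n.2; exact ⟨by omega, by omega⟩⟩)))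
    (hinjm : Function.Injective jminus) (hinjp : Function.Injective jplus) :
    -- conclusion: `G ≅` the HNN extension of `H` with associated subgroups
    -- `B₋ = range jminus`, `B₊ = range jplus` and the shift isomorphism
    -- `A_n ↦ A_{n+1}`; the isomorphism carries the image of `t` to the stable
    -- letter and is compatible with the natural maps from the `A_n`
    ∃ e : ((A ∗ Multiplicative ℤ) ⧸ Subgroup.normalClosure {w}) ≃*
        HNNExtension
          (CoprodI (fun _ : {n : ℤ // μ ≤ n ∧ n ≤ M} => A) ⧸ Subgroup.normalClosure {w₀})
          jminus.range jplus.range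
          ((MonoidHom.ofInjective hinjm).symm.trans (MonoidHom.ofInjective hinjp)),
      e ((QuotientGroup.mk' (Subgroup.normalClosure {w})) (inr (ofAdd 1))) =
        HNNExtension.t ∧
      ∀ x, e ((QuotientGroup.mk' (Subgroup.normalClosure {w})) (ψ x)) =
        HNNExtension.of ((QuotientGroup.mk' (Subgroup.normalClosure {w₀})) x) := by
  classical
  -- `0` lies between `μ` and `M`
  have h00 : μ ≤ 0 ∧ 0 ≤ M := by
    have hlastv : s ⟨k - 1, by omega⟩ = 0 := by
      rw [hs]
      have hiic : Finset.Iic (⟨k - 1, by omega⟩ : Fin k) = Finset.univ := by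
        refine Finset.eq_univ_iff_forall.2 fun i => ?_
        rw [Finset.mem_Iic, Fin.le_def]
        show i.1 ≤ k - 1
        have := i.2
        omega
      rw [hiic]
      exact hsum
    exact ⟨by have := hμ ⟨k - 1, by omega⟩; omega,
      by have := hM ⟨k - 1, by omega⟩; omega⟩
  set Φ : jminus.range ≃* jplus.range :=
    (MonoidHom.ofInjective hinjm).symm.trans (MonoidHom.ofInjective hinjp) with hΦdef
  -- behaviour of the basic maps on generators
  have hψ_of : ∀ (i : {n : ℤ // μ ≤ n ∧ n ≤ M}) (b : A),
      ψ (CoprodI.of (M := fun _ : {n : ℤ // μ ≤ n ∧ n ≤ M} => A) (i := i) b) =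
        inr (ofAdd i.1) * inl b * (inr (ofAdd i.1))⁻¹ := by
    intro i b
    rw [hψ, CoprodI.lift_of]
    simp [MulAut.conj_apply]
  have hjm_of : ∀ (i : {n : ℤ // μ ≤ n ∧ n < M}) (b : A),
      jminus (CoprodI.of (M := fun _ : {n : ℤ // μ ≤ n ∧ n < M} => A) (i := i) b) =
        QuotientGroup.mk' (Subgroup.normalClosure {w₀})
          (CoprodI.of (M := fun _ : {n : ℤ // μ ≤ n ∧ n ≤ M} => A)
            (i := ⟨i.1, i.2.1, i.2.2.le⟩) b) := by
    intro i b
    rw [hjminus, CoprodI.lift_of]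
    rfl
  have hjp_of : ∀ (i : {n : ℤ // μ ≤ n ∧ n < M}) (b : A),
      jplus (CoprodI.of (M := fun _ : {n : ℤ // μ ≤ n ∧ n < M} => A) (i := i) b) =
        QuotientGroup.mk' (Subgroup.normalClosure {w₀})
          (CoprodI.of (M := fun _ : {n : ℤ // μ ≤ n ∧ n ≤ M} => A)
            (i := ⟨i.1 + 1, by obtain ⟨h1, h2⟩ := i.2; exact ⟨by omega, by omega⟩⟩) b) := by
    intro i b
    rw [hjplus, CoprodI.lift_of]
    rfl
  -- the value of `Φ` on elements of the form `jminus y`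
  have hΦval : ∀ (y : CoprodI fun _ : {n : ℤ // μ ≤ n ∧ n < M} => A)
      (hy : jminus y ∈ jminus.range), ((Φ ⟨jminus y, hy⟩ : jplus.range) : _) = jplus y := by
    intro y hy
    rw [hΦdef]
    rw [MulEquiv.trans_apply]
    have h1 : (MonoidHom.ofInjective hinjm).symm ⟨jminus y, hy⟩ = y := by
      rw [MulEquiv.symm_apply_eq]
      exact Subtype.ext (MonoidHom.ofInjective_apply hinjm).symm
    rw [h1]
    exact MonoidHom.ofInjective_apply hinjp
  -- the fundamental HNN relation, in terms of `jminus` and `jplus`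
  have tmulof : ∀ (y : CoprodI fun _ : {n : ℤ // μ ≤ n ∧ n < M} => A),
      (HNNExtension.t : HNNExtension _ jminus.range jplus.range Φ) *
        HNNExtension.of (jminus y) = HNNExtension.of (jplus y) * HNNExtension.t := by
    intro y
    have h1 := HNNExtension.t_mul_of (φ := Φ) ⟨jminus y, ⟨y, rfl⟩⟩
    rw [hΦval y ⟨y, rfl⟩] at h1
    exact h1
  -- the same relation in terms of the indexed generators
  have step : ∀ (n n' : ℤ) (hnn : n' = n + 1) (hn1 : μ ≤ n) (hn2 : n < M)
      (hn1' : μ ≤ n') (hn2' : n' ≤ M) (b : A),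
      (HNNExtension.t : HNNExtension _ jminus.range jplus.range Φ) *
        HNNExtension.of (QuotientGroup.mk' (Subgroup.normalClosure {w₀})
          (CoprodI.of (M := fun _ : {r : ℤ // μ ≤ r ∧ r ≤ M} => A) (i := ⟨n, hn1, hn2.le⟩) b)) =
      HNNExtension.of (QuotientGroup.mk' (Subgroup.normalClosure {w₀})
        (CoprodI.of (M := fun _ : {r : ℤ // μ ≤ r ∧ r ≤ M} => A) (i := ⟨n', hn1', hn2'⟩) b)) *
      HNNExtension.t := by
    intro n n' hnn hn1 hn2 hn1' hn2' b
    subst hnn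
    have h1 := tmulof (CoprodI.of (M := fun _ : {r : ℤ // μ ≤ r ∧ r < M} => A)
      (i := ⟨n, hn1, hn2⟩) b)
    rw [hjm_of, hjp_of] at h1
    exact h1
  -- splitting of conjugation by a power of `t`
  have hsplit : ∀ (y : HNNExtension _ jminus.range jplus.range Φ) (n : ℤ),
      HNNExtension.t ^ (n + 1) * y * (HNNExtension.t ^ (n + 1))⁻¹ =
        HNNExtension.t * (HNNExtension.t ^ n * y * (HNNExtension.t ^ n)⁻¹) *
          HNNExtension.t⁻¹ := by
    intro y n
    rw [show n + 1 = 1 + n by ring, zpow_add, zpow_one]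
    group
  have hsplit' : ∀ (y : HNNExtension _ jminus.range jplus.range Φ) (n : ℤ),
      HNNExtension.t ^ (n - 1) * y * (HNNExtension.t ^ (n - 1))⁻¹ =
        HNNExtension.t⁻¹ * (HNNExtension.t ^ n * y * (HNNExtension.t ^ n)⁻¹) *
          HNNExtension.t := by
    intro y n
    rw [show n = 1 + (n - 1) by ring, zpow_add, zpow_one]
    group
  -- conjugation by `t^n` carries `A_0` to `A_n`
  have conj : ∀ (n : ℤ) (hn1 : μ ≤ n) (hn2 : n ≤ M) (b : A),
      (HNNExtension.t : HNNExtension _ jminus.range jplus.range Φ) ^ n *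
        HNNExtension.of (QuotientGroup.mk' (Subgroup.normalClosure {w₀})
          (CoprodI.of (M := fun _ : {r : ℤ // μ ≤ r ∧ r ≤ M} => A)
            (i := ⟨0, h00.1, h00.2⟩) b)) * (HNNExtension.t ^ n)⁻¹ =
      HNNExtension.of (QuotientGroup.mk' (Subgroup.normalClosure {w₀})
        (CoprodI.of (M := fun _ : {r : ℤ // μ ≤ r ∧ r ≤ M} => A) (i := ⟨n, hn1, hn2⟩) b)) := by
    let P : ℤ → Prop := fun n => ∀ (hn1 : μ ≤ n) (hn2 : n ≤ M) (b : A),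
      (HNNExtension.t : HNNExtension _ jminus.range jplus.range Φ) ^ n *
        HNNExtension.of (QuotientGroup.mk' (Subgroup.normalClosure {w₀})
          (CoprodI.of (M := fun _ : {r : ℤ // μ ≤ r ∧ r ≤ M} => A)
            (i := ⟨0, h00.1, h00.2⟩) b)) * (HNNExtension.t ^ n)⁻¹ =
      HNNExtension.of (QuotientGroup.mk' (Subgroup.normalClosure {w₀})
        (CoprodI.of (M := fun _ : {r : ℤ // μ ≤ r ∧ r ≤ M} => A) (i := ⟨n, hn1, hn2⟩) b))
    have base : ∀ (hn1 : μ ≤ 0) (hn2 : (0:ℤ) ≤ M) (b : A),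
        (HNNExtension.t : HNNExtension _ jminus.range jplus.range Φ) ^ (0:ℤ) *
          HNNExtension.of (QuotientGroup.mk' (Subgroup.normalClosure {w₀})
            (CoprodI.of (M := fun _ : {r : ℤ // μ ≤ r ∧ r ≤ M} => A)
              (i := ⟨0, h00.1, h00.2⟩) b)) * (HNNExtension.t ^ (0:ℤ))⁻¹ =
        HNNExtension.of (QuotientGroup.mk' (Subgroup.normalClosure {w₀})
          (CoprodI.of (M := fun _ : {r : ℤ // μ ≤ r ∧ r ≤ M} => A)
            (i := ⟨0, hn1, hn2⟩) b)) := by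
      intro hn1 hn2 b
      rw [zpow_zero, one_mul, inv_one, mul_one]
    have up : ∀ n, 0 ≤ n → P n := by
      refine fun n hn => Int.le_induction (motive := fun n _ => P n) (m := 0) base ?_ n hn
      intro n _hn ih hn1 hn2 b
      rw [hsplit, ih (by omega) (by omega) b, step n (n + 1) rfl (by omega) (by omega) hn1 hn2 b,
        mul_inv_cancel_right]
    have down : ∀ n, n ≤ 0 → P n := by
      refine fun n hn => Int.le_induction_down (motive := fun n _ => P n) (m := 0) base ?_ n hn
      intro n _hn ih hn1 hn2 b
      have e3 := step (n - 1) n (by ring) hn1 (by omega) (by omega) (by omega) b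
      rw [hsplit', ih (by omega) (by omega) b, mul_assoc, ← e3, ← mul_assoc,
        inv_mul_cancel, one_mul]
    intro n hn1 hn2 b
    rcases le_or_gt 0 n with h | h
    · exact up n h hn1 hn2 b
    · exact down n h.le hn1 hn2 b
  -- the map `A ∗ ⟨t⟩ →* HNN`
  set F₀ : A ∗ Multiplicative ℤ →* HNNExtension _ jminus.range jplus.range Φ :=
    Coprod.lift
      ((HNNExtension.of (φ := Φ)).comp ((QuotientGroup.mk' (Subgroup.normalClosure {w₀})).comp
        (CoprodI.of (M := fun _ : {n : ℤ // μ ≤ n ∧ n ≤ M} => A) (i := ⟨0, h00.1, h00.2⟩))))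
      (zpowersHom _ HNNExtension.t) with hF₀def
  have hF₀inl : ∀ b : A, F₀ (inl b) = HNNExtension.of (QuotientGroup.mk' (Subgroup.normalClosure {w₀})
      (CoprodI.of (M := fun _ : {n : ℤ // μ ≤ n ∧ n ≤ M} => A) (i := ⟨0, h00.1, h00.2⟩) b)) := by
    intro b
    rw [hF₀def, Coprod.lift_apply_inl]
    rfl
  have hF₀inr : ∀ n : ℤ, F₀ (inr (ofAdd n)) = HNNExtension.t ^ n := by
    intro n
    rw [hF₀def, Coprod.lift_apply_inr]
    rfl
  -- the key identity: `F₀ ∘ ψ = of ∘ mk`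
  have key : ∀ x, F₀ (ψ x) = (HNNExtension.of (φ := Φ))
      (QuotientGroup.mk' (Subgroup.normalClosure {w₀}) x) := by
    have hhom : F₀.comp ψ = (HNNExtension.of (φ := Φ)).comp
        (QuotientGroup.mk' (Subgroup.normalClosure {w₀})) := by
      refine CoprodI.ext_hom _ _ fun i => ?_
      ext b
      simp only [MonoidHom.coe_comp, Function.comp_apply]
      rw [hψ_of, map_mul, map_mul, map_inv, hF₀inr, hF₀inl]
      exact conj i.1 i.2.1 i.2.2 b
    exact fun x => DFunLike.congr_fun hhom x
  have hw₀mem : QuotientGroup.mk' (Subgroup.normalClosure {w₀}) w₀ = 1 := by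
    rw [QuotientGroup.mk'_apply, QuotientGroup.eq_one_iff]
    exact Subgroup.subset_normalClosure rfl
  have hwmem : QuotientGroup.mk' (Subgroup.normalClosure {w}) w = 1 := by
    rw [QuotientGroup.mk'_apply, QuotientGroup.eq_one_iff]
    exact Subgroup.subset_normalClosure rfl
  have hkerF : Subgroup.normalClosure {w} ≤ F₀.ker := by
    refine Subgroup.normalClosure_le_normal ?_
    rw [Set.singleton_subset_iff, SetLike.mem_coe, MonoidHom.mem_ker, ← hw₀, key, hw₀mem,
      map_one]
  set F : (A ∗ Multiplicative ℤ) ⧸ Subgroup.normalClosure {w} →*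
      HNNExtension _ jminus.range jplus.range Φ :=
    QuotientGroup.lift _ F₀ hkerF with hFdef
  have hFmk : ∀ x, F (QuotientGroup.mk' (Subgroup.normalClosure {w}) x) = F₀ x := fun _ => rfl
  -- the map `H →* G`
  have hkerGH : Subgroup.normalClosure {w₀} ≤
      ((QuotientGroup.mk' (Subgroup.normalClosure {w})).comp ψ).ker := by
    refine Subgroup.normalClosure_le_normal ?_
    rw [Set.singleton_subset_iff, SetLike.mem_coe, MonoidHom.mem_ker, MonoidHom.comp_apply,
      hw₀, hwmem]
  set GH : (CoprodI (fun _ : {n : ℤ // μ ≤ n ∧ n ≤ M} => A) ⧸ Subgroup.normalClosure {w₀}) →*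
      (A ∗ Multiplicative ℤ) ⧸ Subgroup.normalClosure {w} :=
    QuotientGroup.lift _ ((QuotientGroup.mk' (Subgroup.normalClosure {w})).comp ψ) hkerGH
    with hGHdef
  have hGHmk : ∀ x, GH (QuotientGroup.mk' (Subgroup.normalClosure {w₀}) x) =
      QuotientGroup.mk' (Subgroup.normalClosure {w}) (ψ x) := fun _ => rfl
  -- the commuting condition for the HNN universal property
  have hcomm : ∀ y : CoprodI fun _ : {n : ℤ // μ ≤ n ∧ n < M} => A,
      QuotientGroup.mk' (Subgroup.normalClosure {w}) (inr (ofAdd 1)) * GH (jminus y) =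
        GH (jplus y) * QuotientGroup.mk' (Subgroup.normalClosure {w}) (inr (ofAdd 1)) := by
    have hhom : (MulAut.conj (QuotientGroup.mk' (Subgroup.normalClosure {w})
          (inr (ofAdd 1)))).toMonoidHom.comp (GH.comp jminus) = GH.comp jplus := by
      refine CoprodI.ext_hom _ _ fun i => ?_
      ext b
      simp only [MonoidHom.coe_comp, Function.comp_apply, MulEquiv.coe_toMonoidHom,
        MulAut.conj_apply]
      rw [hjm_of, hjp_of, hGHmk, hGHmk, hψ_of, hψ_of]
      have hfree : (inr (ofAdd (1:ℤ)) : A ∗ Multiplicative ℤ) *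
            (inr (ofAdd i.1) * inl b * (inr (ofAdd i.1))⁻¹) * (inr (ofAdd (1:ℤ)))⁻¹ =
          inr (ofAdd (i.1 + 1)) * inl b * (inr (ofAdd (i.1 + 1)))⁻¹ := by
        rw [show (i.1 : ℤ) + 1 = 1 + i.1 by ring, ofAdd_add, map_mul]
        group
      show QuotientGroup.mk' (Subgroup.normalClosure {w}) (inr (ofAdd (1:ℤ))) *
          QuotientGroup.mk' (Subgroup.normalClosure {w})
            (inr (ofAdd i.1) * inl b * (inr (ofAdd i.1))⁻¹) *
          (QuotientGroup.mk' (Subgroup.normalClosure {w}) (inr (ofAdd (1:ℤ))))⁻¹ =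
        QuotientGroup.mk' (Subgroup.normalClosure {w})
          (inr (ofAdd (i.1 + 1)) * inl b * (inr (ofAdd (i.1 + 1)))⁻¹)
      rw [← hfree]
      simp only [map_mul, map_inv, mul_assoc]
    intro y
    have h2 := DFunLike.congr_fun hhom y
    simp only [MonoidHom.coe_comp, Function.comp_apply, MulEquiv.coe_toMonoidHom,
      MulAut.conj_apply] at h2
    rw [← h2]
    group
  have hcond : ∀ u : jminus.range,
      QuotientGroup.mk' (Subgroup.normalClosure {w}) (inr (ofAdd 1)) * GH ↑u =
        GH ↑(Φ u) * QuotientGroup.mk' (Subgroup.normalClosure {w}) (inr (ofAdd 1)) := by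
    rintro ⟨z, hz⟩
    obtain ⟨y, rfl⟩ := hz
    rw [hΦval y ⟨y, rfl⟩]
    exact hcomm y
  set Gbar : HNNExtension _ jminus.range jplus.range Φ →*
      (A ∗ Multiplicative ℤ) ⧸ Subgroup.normalClosure {w} :=
    HNNExtension.lift GH (QuotientGroup.mk' (Subgroup.normalClosure {w}) (inr (ofAdd 1))) hcond
    with hGbardef
  have hGbarof : ∀ h, Gbar (HNNExtension.of h) = GH h := by
    intro h
    rw [hGbardef, HNNExtension.lift_of]
  have hGbart : Gbar HNNExtension.t =
      QuotientGroup.mk' (Subgroup.normalClosure {w}) (inr (ofAdd 1)) := by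
    rw [hGbardef, HNNExtension.lift_t]
  -- the two composites are the identity
  have hGF : Gbar.comp F = MonoidHom.id _ := by
    apply QuotientGroup.monoidHom_ext
    refine Coprod.hom_ext ?_ ?_
    · ext b
      simp only [MonoidHom.coe_comp, Function.comp_apply, MonoidHom.id_apply]
      rw [hFmk, hF₀inl, hGbarof, hGHmk, hψ_of]
      show QuotientGroup.mk' (Subgroup.normalClosure {w})
        (inr (ofAdd (0:ℤ)) * inl b * (inr (ofAdd (0:ℤ)))⁻¹) = _
      rw [ofAdd_zero, map_one, inv_one, one_mul, mul_one]
    · refine MonoidHom.ext_mint ?_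
      simp only [MonoidHom.coe_comp, Function.comp_apply, MonoidHom.id_apply]
      rw [hFmk, hF₀inr, zpow_one, hGbart]
  have hFG : F.comp Gbar = MonoidHom.id _ := by
    refine HNNExtension.hom_ext ?_ ?_
    · apply QuotientGroup.monoidHom_ext
      refine CoprodI.ext_hom _ _ fun i => ?_
      ext b
      simp only [MonoidHom.coe_comp, Function.comp_apply, MonoidHom.id_apply]
      rw [hGbarof, hGHmk, hFmk, key]
    · simp only [MonoidHom.coe_comp, Function.comp_apply, MonoidHom.id_apply]
      rw [hGbart, hFmk, hF₀inr, zpow_one]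
  refine ⟨MonoidHom.toMulEquiv F Gbar hGF hFG, ?_, ?_⟩
  · show F (QuotientGroup.mk' (Subgroup.normalClosure {w}) (inr (ofAdd 1))) = _
    rw [hFmk, hF₀inr, zpow_one]
  · intro x
    show F (QuotientGroup.mk' (Subgroup.normalClosure {w}) (ψ x)) = _
    rw [hFmk, key]
end

section
/- Let A be a group generated by elements a_1, a_2, a_3, a_4 satisfying a_1 = a_3, a_1 a_2 a_3 a_4 = 1, and a_4 (a_2^{-1} a_4)^m = 1 for some integer m ≥ 1. Then A is cyclic; indeed A is generated by a_3 a_4. -/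
/-- If a group `A` is generated by elements `a₁, a₂, a₃, a₄` with `a₁ = a₃`,
`a₁a₂a₃a₄ = 1` and `a₄(a₂⁻¹a₄)^m = 1` for some integer `m ≥ 1`, then `A` is cyclic,
generated by `a₃a₄`. -/
theorem cyclic_of_relations_case_iv
    {A : Type*} [Group A] (a₁ a₂ a₃ a₄ : A)
    (hgen : Subgroup.closure ({a₁, a₂, a₃, a₄} : Set A) = ⊤)
    (h13 : a₁ = a₃) (hrel : a₁ * a₂ * a₃ * a₄ = 1)
    (m : ℤ) (hm : 1 ≤ m) (hrel' : a₄ * (a₂⁻¹ * a₄) ^ m = 1) :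
    Subgroup.zpowers (a₃ * a₄) = ⊤ ∧ IsCyclic A := by
  subst h13
  set g := a₁ * a₄ with hg
  have ha2 : a₂ = a₁⁻¹ * a₄⁻¹ * a₁⁻¹ := by
    calc a₂ = a₁⁻¹ * (a₁ * a₂ * a₁ * a₄ * a₄⁻¹ * a₁⁻¹) := by group
      _ = a₁⁻¹ * (1 * a₄⁻¹ * a₁⁻¹) := by rw [hrel]
      _ = a₁⁻¹ * a₄⁻¹ * a₁⁻¹ := by group
  have hkey : a₂⁻¹ * a₄ = g ^ (2 : ℤ) := by
    rw [ha2, hg, zpow_two]; group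
  have ha4 : a₄ = g ^ (-(2 * m)) := by
    rw [hkey, ← zpow_mul] at hrel'
    have h : a₄ * g ^ (2 * m) * (g ^ (2 * m))⁻¹ = (g ^ (2 * m))⁻¹ := by
      rw [hrel', one_mul]
    rw [mul_inv_cancel_right] at h
    rw [h, zpow_neg]
  have ha1 : a₁ = g ^ (1 + 2 * m) := by
    have h : a₁ = g * a₄⁻¹ := by rw [hg]; group
    rw [h, ha4, zpow_neg, inv_inv, zpow_add, zpow_one]
  have hmem1 : a₁ ∈ Subgroup.zpowers g := ⟨1 + 2 * m, ha1.symm⟩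
  have hmem4 : a₄ ∈ Subgroup.zpowers g := ⟨-(2 * m), ha4.symm⟩
  have htop : Subgroup.zpowers g = ⊤ := by
    rw [eq_top_iff, ← hgen, Subgroup.closure_le]
    intro x hx
    simp only [Set.mem_insert_iff, Set.mem_singleton_iff] at hx
    rcases hx with h | h | h | h <;> subst h
    · exact hmem1
    · rw [ha2]
      exact Subgroup.mul_mem _ (Subgroup.mul_mem _ (Subgroup.inv_mem _ hmem1)
        (Subgroup.inv_mem _ hmem4)) (Subgroup.inv_mem _ hmem1)
    · exact hmem1
    · exact hmem4
  exact ⟨htop, ⟨⟨g, fun x => Subgroup.mem_zpowers_iff.mp (by rw [htop]; trivial)⟩⟩⟩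
end

section
/- Let m_1, m_2, m_3, m_4 be strictly positive integers with greatest common divisor 1, such that for each index i there exists an index k ≠ i with m_i dividing m_k. Then one of the following holds: (a) the multiset {m_1, m_2, m_3, m_4} consists of two equal pairs (i.e. there is a partition of the indices into two pairs on each of which the values agree); or (b) three of the m_i are equal and the fourth equals 1; or (c) two of the m_i are equal, and each of the other two divides that common value, and those other two are coprime to one another. -/
lemma exists_perm4 (a b c d : Fin 4) (h1 : a ≠ b) (h2 : a ≠ c) (h3 : a ≠ d)
    (h4 : b ≠ c) (h5 : b ≠ d) (h6 : c ≠ d) :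
    ∃ σ : Equiv.Perm (Fin 4), σ 0 = a ∧ σ 1 = b ∧ σ 2 = c ∧ σ 3 = d := by
  have hinj : Function.Injective ![a, b, c, d] := by
    intro i j hij
    fin_cases i <;> fin_cases j <;> simp_all
  refine ⟨Equiv.ofBijective _ (Finite.injective_iff_bijective.mp hinj), ?_, ?_, ?_, ?_⟩ <;>
    simp [Equiv.ofBijective]

/-- Let `m₁, m₂, m₃, m₄` be strictly positive integers with greatest common divisor
`1`, such that each `mᵢ` divides some `m_k` with `k ≠ i`.  Then one of the following
holds: (a) the values consist of two equal pairs; (b) three of the values are equal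
and the fourth equals `1`; or (c) two of the values are equal, each of the other two
divides that common value, and the other two are coprime to one another. -/
theorem divisibility_structure_of_four_positive_integers
    (m : Fin 4 → ℕ) (hm : ∀ i, 0 < m i)
    (hgcd : Finset.univ.gcd m = 1)
    (hdvd : ∀ i, ∃ k, k ≠ i ∧ m i ∣ m k) :
    (∃ σ : Equiv.Perm (Fin 4), m (σ 0) = m (σ 1) ∧ m (σ 2) = m (σ 3)) ∨
    (∃ σ : Equiv.Perm (Fin 4),
      m (σ 0) = m (σ 1) ∧ m (σ 1) = m (σ 2) ∧ m (σ 3) = 1) ∨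
    (∃ σ : Equiv.Perm (Fin 4), m (σ 0) = m (σ 1) ∧
      m (σ 2) ∣ m (σ 0) ∧ m (σ 3) ∣ m (σ 0) ∧
      Nat.Coprime (m (σ 2)) (m (σ 3))) := by
  obtain ⟨i0, hmax⟩ := Finite.exists_max m
  obtain ⟨k, hki, hdvdk⟩ := hdvd i0
  have hk : m k = m i0 := le_antisymm (hmax k) (Nat.le_of_dvd (hm k) hdvdk)
  have hcd : ∀ i j : Fin 4, i ≠ j → ∃ c d : Fin 4,
      c ≠ d ∧ c ≠ i ∧ c ≠ j ∧ d ≠ i ∧ d ≠ j := by decide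
  obtain ⟨c, d, hcd1, hci, hck, hdi, hdk⟩ := hcd i0 k (Ne.symm hki)
  have cover : ∀ x : Fin 4, x = i0 ∨ x = k ∨ x = c ∨ x = d := by
    have : ∀ i j c d x : Fin 4, i ≠ j → c ≠ d → c ≠ i → c ≠ j → d ≠ i → d ≠ j →
        (x = i ∨ x = j ∨ x = c ∨ x = d) := by decide
    exact fun x => this i0 k c d x (Ne.symm hki) hcd1 hci hck hdi hdk
  by_cases heq : m c = m d
  · -- case (a)
    obtain ⟨σ, h0, h1, h2, h3⟩ := exists_perm4 i0 k c d (Ne.symm hki) (Ne.symm hci)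
      (Ne.symm hdi) (Ne.symm hck) (Ne.symm hdk) hcd1
    exact Or.inl ⟨σ, by rw [h0, h1, h2, h3]; exact ⟨hk.symm, heq⟩⟩
  · -- both c, d divide the max
    obtain ⟨kc, hkc_ne, hkc_dvd⟩ := hdvd c
    obtain ⟨kd, hkd_ne, hkd_dvd⟩ := hdvd d
    have hc' : m c ∣ m i0 ∨ m c ∣ m d := by
      rcases cover kc with h | h | h | h
      · exact Or.inl (h ▸ hkc_dvd)
      · exact Or.inl (by rw [h, hk] at hkc_dvd; exact hkc_dvd)
      · exact absurd h hkc_ne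
      · exact Or.inr (h ▸ hkc_dvd)
    have hd' : m d ∣ m i0 ∨ m d ∣ m c := by
      rcases cover kd with h | h | h | h
      · exact Or.inl (h ▸ hkd_dvd)
      · exact Or.inl (by rw [h, hk] at hkd_dvd; exact hkd_dvd)
      · exact Or.inr (h ▸ hkd_dvd)
      · exact absurd h hkd_ne
    have hcM : m c ∣ m i0 ∧ m d ∣ m i0 := by
      rcases hc' with hc | hc <;> rcases hd' with hd | hd
      · exact ⟨hc, hd⟩
      · exact ⟨hc, hd.trans hc⟩
      · exact ⟨hc.trans hd, hd⟩
      · exact absurd (Nat.dvd_antisymm hc hd) heq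
    have hcop : Nat.Coprime (m c) (m d) := by
      have hdvd_all : ∀ x : Fin 4, Nat.gcd (m c) (m d) ∣ m x := by
        intro x
        rcases cover x with h | h | h | h <;> subst h
        · exact (Nat.gcd_dvd_left _ _).trans hcM.1
        · exact ((Nat.gcd_dvd_left _ _).trans hcM.1).trans (hk ▸ dvd_refl _)
        · exact Nat.gcd_dvd_left _ _
        · exact Nat.gcd_dvd_right _ _
      have : Nat.gcd (m c) (m d) ∣ Finset.univ.gcd m :=
        Finset.dvd_gcd fun x _ => hdvd_all x
      rw [hgcd] at this
      exact Nat.dvd_one.mp this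
    obtain ⟨σ, h0, h1, h2, h3⟩ := exists_perm4 i0 k c d (Ne.symm hki) (Ne.symm hci)
      (Ne.symm hdi) (Ne.symm hck) (Ne.symm hdk) hcd1
    exact Or.inr (Or.inr ⟨σ, by rw [h0, h1, h2, h3]; exact ⟨hk.symm, hcM.1, hcM.2, hcop⟩⟩)
end
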